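/- arXiv:0905.0595 — 3 statements merged into one kernel-verified Lean document; each statement's English description precedes it below -/
import Mathlib

section
/- For any class R of morphisms in a cocomplete category M, the class □R is closed under transfinite composition: the composite of a transfinite chain of morphisms, each lying in □R, again lies in □R. -/
open CategoryTheory CategoryTheory.Limits

universe w v u

namespace Paper

variable {K : Type u} [Category.{v} K]

/-- The class of morphisms with the right lifting property w.r.t. every member of `L`. -/
def rlp (L : MorphismProperty K) : MorphismProperty K :=
  fun _ _ g => ∀ ⦃A B : K⦄ (f : A ⟶ B), L f → HasLiftingProperty f g

/-- The class of morphisms with the left lifting property w.r.t. every member of `R`. -/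
def llp (R : MorphismProperty K) : MorphismProperty K :=
  fun _ _ f => ∀ ⦃X Y : K⦄ (g : X ⟶ Y), R g → HasLiftingProperty f g

/-- `f` is a retract of `f'` in the arrow category. -/
def IsRetractArrow {A B X Y : K} (f : A ⟶ B) (f' : X ⟶ Y) : Prop :=
  ∃ (i : Arrow.mk f ⟶ Arrow.mk f') (r : Arrow.mk f' ⟶ Arrow.mk f), i ≫ r = 𝟙 (Arrow.mk f)

/-- The inclusion functor of the initial segment below `j`. -/
def below {J : Type w} [Preorder J] (j : J) : Set.Iio j ⥤ J :=
  Monotone.functor (f := (Subtype.val : Set.Iio j → J)) (fun _ _ h => h)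

/-- The canonical cocone of the restriction of a chain `F` below `j`, with point `F.obj j`. -/
def restrictionCocone {J : Type w} [Preorder J] (F : J ⥤ K) (j : J) :
    Cocone (below j ⋙ F) where
  pt := F.obj j
  ι :=
    { app := fun i => F.map (homOfLE i.2.le)
      naturality := by
        intro i i' g
        dsimp [below]
        rw [← F.map_comp, Category.comp_id]
        rfl }

/-- A chain is smooth (continuous) if at every limit ordinal stage it is the colimit of the
preceding stages. -/
def IsSmooth {J : Type w} [Preorder J] (F : J ⥤ K) : Prop :=
  ∀ j : J, Order.IsSuccLimit j → Nonempty (IsColimit (restrictionCocone F j))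

/-- `f` is a transfinite composition of morphisms belonging to `S`. -/
def IsTransfiniteCompositionOf (S : MorphismProperty K) {X Y : K} (f : X ⟶ Y) : Prop :=
  ∃ (J : Type v) (_ : LinearOrder J) (_ : OrderBot J) (_ : SuccOrder J)
    (_ : WellFoundedLT J) (F : J ⥤ K) (c : Cocone F) (_ : IsColimit c)
    (hX : F.obj ⊥ = X) (hY : c.pt = Y),
    IsSmooth F ∧ (∀ j : J, ¬IsMax j → S (F.map (homOfLE (Order.le_succ j)))) ∧
      f = eqToHom hX.symm ≫ c.ι.app ⊥ ≫ eqToHom hY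

/-- The pushouts (cobase changes) of morphisms belonging to `S`. -/
def pushouts (S : MorphismProperty K) : MorphismProperty K :=
  fun _C _P f' => ∃ (A B : K) (f : A ⟶ B) (g : A ⟶ _C) (g' : B ⟶ _P),
    S f ∧ IsPushout f g g' f'

/-- `X`-cellular morphisms: transfinite compositions of pushouts of morphisms from `X`. -/
def IsCellular (X : MorphismProperty K) {A B : K} (f : A ⟶ B) : Prop :=
  IsTransfiniteCompositionOf (pushouts X) f

/-- A class of morphisms is cofibrantly closed if it is closed under transfinite
compositions, pushouts and retracts in the arrow category. -/
structure CofibrantlyClosed (S : MorphismProperty K) : Prop where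
  retract : ∀ {A B X Y : K} (f : A ⟶ B) (f' : X ⟶ Y), IsRetractArrow f f' → S f' → S f
  pushout : ∀ {A B C P : K} (f : A ⟶ B) (g : A ⟶ C) (g' : B ⟶ P) (f' : C ⟶ P),
    IsPushout f g g' f' → S f → S f'
  transfinite : ∀ {A B : K} (f : A ⟶ B), IsTransfiniteCompositionOf S f → S f

/-- The smallest cofibrantly closed class containing `X`. -/
def cofibrantClosure (X : MorphismProperty K) : MorphismProperty K :=
  fun _ _ f => ∀ S : MorphismProperty K, CofibrantlyClosed S → X ≤ S → S f

/-- The strict image of a class of morphisms under a functor. -/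
def strictImage {L : Type*} [Category L] (F : L ⥤ K) (X : MorphismProperty L) :
    MorphismProperty K :=
  fun A B h => ∃ (A' B' : L) (x : A' ⟶ B'), X x ∧ A = F.obj A' ∧ B = F.obj B' ∧ HEq h (F.map x)

/-- `(L, R)` is a weak factorization system. -/
structure IsWFS (L R : MorphismProperty K) : Prop where
  rlp_eq : R = rlp L
  llp_eq : L = llp R
  fact : ∀ {A B : K} (h : A ⟶ B), ∃ (C : K) (f : A ⟶ C) (g : C ⟶ B), L f ∧ R g ∧ f ≫ g = h


theorem stmt5 [HasColimits K] (R : MorphismProperty K)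
    (J : Type v) [LinearOrder J] [OrderBot J] [SuccOrder J] [WellFoundedLT J]
    (F : J ⥤ K) (hsmooth : IsSmooth F)
    (hsucc : ∀ j : J, ¬IsMax j → llp R (F.map (homOfLE (Order.le_succ j))))
    (c : Cocone F) (hc : IsColimit c) : llp R (c.ι.app ⊥) := by
  intro X Y g hg
  constructor
  intro u v sq
  constructor
  -- the set of "good" partial lift graphs
  let Good : Set (Set (Σ j : J, F.obj j ⟶ X)) := fun G =>
    (∀ (j : J) (a b : F.obj j ⟶ X), (⟨j, a⟩ : Σ j : J, F.obj j ⟶ X) ∈ G →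
        (⟨j, b⟩ : Σ j : J, F.obj j ⟶ X) ∈ G → a = b) ∧
    (∀ (j : J) (a : F.obj j ⟶ X), (⟨j, a⟩ : Σ j : J, F.obj j ⟶ X) ∈ G →
        ∀ (i : J) (h : i ≤ j), (⟨i, F.map (homOfLE h) ≫ a⟩ : Σ j : J, F.obj j ⟶ X) ∈ G) ∧
    ((⟨⊥, u⟩ : Σ j : J, F.obj j ⟶ X) ∈ G) ∧
    (∀ (j : J) (a : F.obj j ⟶ X), (⟨j, a⟩ : Σ j : J, F.obj j ⟶ X) ∈ G →
        a ≫ g = c.ι.app j ≫ v)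
  have hG0 : ({⟨⊥, u⟩} : Set (Σ j : J, F.obj j ⟶ X)) ∈ Good := by
    refine ⟨?_, ?_, rfl, ?_⟩
    · intro j a b ha hb
      obtain ⟨rfl, ha⟩ := Sigma.mk.inj_iff.mp (Set.mem_singleton_iff.mp ha)
      obtain ⟨-, hb⟩ := Sigma.mk.inj_iff.mp (Set.mem_singleton_iff.mp hb)
      rw [eq_of_heq ha, eq_of_heq hb]
    · intro j a ha i h
      obtain ⟨rfl, ha⟩ := Sigma.mk.inj_iff.mp (Set.mem_singleton_iff.mp ha)
      obtain rfl := eq_of_heq ha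
      obtain rfl : i = ⊥ := le_bot_iff.mp h
      have : F.map (homOfLE h) = 𝟙 _ := by
        rw [Subsingleton.elim (homOfLE h) (𝟙 (⊥ : J))]; simp
      simp [this]
    · intro j a ha
      obtain ⟨rfl, ha⟩ := Sigma.mk.inj_iff.mp (Set.mem_singleton_iff.mp ha)
      obtain rfl := eq_of_heq ha
      exact sq.w
  have hub : ∀ ch ⊆ Good, IsChain (· ⊆ ·) ch → ch.Nonempty →
      ∃ ub ∈ Good, ∀ s ∈ ch, s ⊆ ub := by
    rintro ch hch hchain ⟨G0, hG0'⟩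
    refine ⟨⋃₀ ch, ⟨?_, ?_, ?_, ?_⟩, fun s hs => Set.subset_sUnion_of_mem hs⟩
    · rintro j a b ⟨Ga, hGa, ha⟩ ⟨Gb, hGb, hb⟩
      rcases hchain.total hGa hGb with h | h
      · exact (hch hGb).1 j a b (h ha) hb
      · exact (hch hGa).1 j a b ha (h hb)
    · rintro j a ⟨Ga, hGa, ha⟩ i h
      exact ⟨Ga, hGa, (hch hGa).2.1 j a ha i h⟩
    · exact ⟨G0, hG0', (hch hG0').2.2.1⟩
    · rintro j a ⟨Ga, hGa, ha⟩
      exact (hch hGa).2.2.2 j a ha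
  obtain ⟨M, -, hMG, hMmax⟩ := zorn_subset_nonempty Good hub _ hG0
  obtain ⟨hfun, hdown, hbot, heq⟩ := hMG
  -- the domain of M is everything
  have hdom : ∀ j : J, ∃ a : F.obj j ⟶ X, (⟨j, a⟩ : Σ j : J, F.obj j ⟶ X) ∈ M := by
    by_contra hne
    push_neg at hne
    obtain ⟨j, hj, hjmin⟩ := wellFounded_lt.has_min _ hne
    -- values below j
    have hlt : ∀ i : J, i < j → ∃ a : F.obj i ⟶ X, (⟨i, a⟩ : Σ j : J, F.obj j ⟶ X) ∈ M := by
      intro i hi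
      by_contra hni
      push_neg at hni
      exact hjmin i hni hi
    choose l hl using fun (i : J) => fun (hi : i < j) => hlt i hi
    have hlcomp : ∀ (i k : J) (hi : i < j) (hk : k < j) (h : i ≤ k),
        F.map (homOfLE h) ≫ l k hk = l i hi := by
      intro i k hi hk h
      exact hfun i _ _ (hdown k (l k hk) (hl k hk) i h) (hl i hi)
    have hleq : ∀ (i : J) (hi : i < j), l i hi ≫ g = c.ι.app i ≫ v := fun i hi =>
      heq i (l i hi) (hl i hi)
    -- produce a value at j
    have hstep : ∃ a : F.obj j ⟶ X,
        (∀ (i : J) (hi : i < j), F.map (homOfLE hi.le) ≫ a = l i hi) ∧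
        a ≫ g = c.ι.app j ≫ v := by
      rcases eq_or_ne j ⊥ with rfl | hjb
      · exact absurd hbot (hj u)
      by_cases hlim : Order.IsSuccLimit j
      · obtain ⟨hco⟩ := hsmooth j hlim
        let k : Cocone (below j ⋙ F) :=
          { pt := X
            ι :=
              { app := fun i => l i.1 i.2
                naturality := by
                  rintro ⟨i, hi⟩ ⟨i', hi'⟩ gg
                  have hle : i ≤ i' := leOfHom gg
                  have : (below j ⋙ F).map gg = F.map (homOfLE hle) := by
                    congr 1
                    apply Subsingleton.elim
                  simp only [Functor.const_obj_map, Category.comp_id]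
                  rw [this]; erw [hlcomp i i' hi hi' hle]
                  exact (Category.comp_id _).symm } }
        refine ⟨hco.desc k, fun i hi => hco.fac k ⟨i, hi⟩, ?_⟩
        apply hco.hom_ext
        rintro ⟨i, hi⟩
        erw [reassoc_of% (hco.fac k ⟨i, hi⟩)]
        have : (restrictionCocone F j).ι.app ⟨i, hi⟩ = F.map (homOfLE hi.le) := rfl
        rw [this]; change l i hi ≫ g = _; rw [hleq i hi]
        exact (c.w_assoc (homOfLE hi.le) v).symm
      · -- successor case
        rw [Order.isSuccLimit_iff, not_and_or] at hlim
        rcases hlim with h' | h'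
        · simp at h'; exact absurd h' hjb
        rw [Order.not_isSuccPrelimit_iff_succ_eq] at h'
        obtain ⟨i, hiM, rfl⟩ := h'
        have hij : i < Order.succ i := Order.lt_succ_of_not_isMax hiM
        have : HasLiftingProperty (F.map (homOfLE (Order.le_succ i))) g := hsucc i hiM g hg
        have sq' : CommSq (l i hij) (F.map (homOfLE (Order.le_succ i))) g
            (c.ι.app (Order.succ i) ≫ v) := by
          constructor
          rw [hleq i hij, ← c.w (homOfLE (Order.le_succ i))]
          simp
        refine ⟨sq'.lift, ?_, sq'.fac_right⟩
        intro k hk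
        have hki : k ≤ i := (Order.lt_succ_iff_of_not_isMax hiM).mp hk
        have : homOfLE hk.le = homOfLE hki ≫ homOfLE (Order.le_succ i) := rfl
        rw [this, F.map_comp, Category.assoc, sq'.fac_left]
        exact hlcomp k i hk hij hki
    obtain ⟨a, ha, hag⟩ := hstep
    -- extend M
    have hM' : insert (⟨j, a⟩ : Σ j : J, F.obj j ⟶ X) M ∈ Good := by
      refine ⟨?_, ?_, Set.mem_insert_of_mem _ hbot, ?_⟩
      · rintro j' a' b' (h1 | h1) (h2 | h2)
        · obtain ⟨rfl, h1⟩ := Sigma.mk.inj_iff.mp h1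
          obtain ⟨-, h2⟩ := Sigma.mk.inj_iff.mp h2
          rw [eq_of_heq h1, eq_of_heq h2]
        · obtain ⟨he, -⟩ := Sigma.mk.inj_iff.mp h1
          subst he
          exact absurd h2 (hj b')
        · obtain ⟨he, -⟩ := Sigma.mk.inj_iff.mp h2
          subst he
          exact absurd h1 (hj a')
        · exact hfun j' a' b' h1 h2
      · rintro j' a' (h1 | h1) i h
        · obtain ⟨rfl, h1⟩ := Sigma.mk.inj_iff.mp h1
          obtain rfl := eq_of_heq h1
          rcases eq_or_lt_of_le h with rfl | hij
          · left
            have : F.map (homOfLE h) = 𝟙 _ := by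
              rw [Subsingleton.elim (homOfLE h) (𝟙 _)]; simp
            rw [this]; simp
          · right
            rw [ha i hij]
            exact hl i hij
        · exact Set.mem_insert_of_mem _ (hdown j' a' h1 i h)
      · rintro j' a' (h1 | h1)
        · obtain ⟨rfl, h1⟩ := Sigma.mk.inj_iff.mp h1
          obtain rfl := eq_of_heq h1
          exact hag
        · exact heq j' a' h1
    have hMM := hMmax hM' (Set.subset_insert _ _)
    exact hj a (hMM (Set.mem_insert _ M))
  -- build the full cocone
  choose l hl using hdom
  have hlcomp : ∀ (i k : J) (h : i ≤ k), F.map (homOfLE h) ≫ l k = l i := by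
    intro i k h
    exact hfun i _ _ (hdown k (l k) (hl k) i h) (hl i)
  let k : Cocone F :=
    { pt := X
      ι :=
        { app := l
          naturality := by
            intro i i' gg
            have hle : i ≤ i' := leOfHom gg
            have : gg = homOfLE hle := Subsingleton.elim _ _
            simp only [Functor.const_obj_map, Category.comp_id]
            rw [this, hlcomp i i' hle]
            simp } }
  refine ⟨⟨hc.desc k, ?_, ?_⟩⟩
  · have := hc.fac k ⊥
    rw [this]
    exact hfun ⊥ _ _ (hl ⊥) hbot
  · apply hc.hom_ext
    intro i
    rw [reassoc_of% (hc.fac k i)]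
    exact heq i (l i) (hl i)


end Paper
end

section
/- If a cocomplete category K admits a fully faithful functor E : K → Set^{A^op} (A small) with a left adjoint F, and the class of all morphisms of Set^{A^op} is the smallest cofibrantly closed class generated by a set X, then the class of all morphisms of K is the smallest cofibrantly closed class generated by the set F(X); hence (Mor K, Iso) is a cofibrantly generated weak factorization system. -/
open CategoryTheory CategoryTheory.Limits

universe w v u

namespace Paper

variable {K : Type u} [Category.{v} K]

section Aux

universe w' u'

variable {L' : Type u'} [Category.{v} L']

lemma isRetractArrow_map (G : L' ⥤ K) {A B X Y : L'} {f : A ⟶ B} {f' : X ⟶ Y}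
    (h : IsRetractArrow f f') : IsRetractArrow (G.map f) (G.map f') := by
  obtain ⟨i, r, hir⟩ := h
  exact ⟨G.mapArrow.map i, G.mapArrow.map r, by
    have hh := congrArg G.mapArrow.map hir
    rw [G.mapArrow.map_comp, G.mapArrow.map_id] at hh; exact hh⟩

lemma isTransfiniteCompositionOf_map (G : L' ⥤ K) [PreservesColimitsOfSize.{v, v} G]
    (S : MorphismProperty K) {P Q : L'} {f : P ⟶ Q}
    (hf : IsTransfiniteCompositionOf (fun _ _ g => S (G.map g)) f) :
    IsTransfiniteCompositionOf S (G.map f) := by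
  obtain ⟨J, iJ1, iJ2, iJ3, iJ4, Fc, c, hc, hP, hQ, hsm, hsucc, heq⟩ := hf
  subst hP; subst hQ
  refine ⟨J, iJ1, iJ2, iJ3, iJ4, Fc ⋙ G, G.mapCocone c, isColimitOfPreserves G hc, rfl, rfl,
    ?_, ?_, ?_⟩
  · intro j hj
    obtain ⟨hl⟩ := hsm j hj
    exact ⟨isColimitOfPreserves G hl⟩
  · intro j hj
    exact hsucc j hj
  · rw [heq]
    simp [eqToHom_map]

end Aux

theorem stmt14 [HasColimits K] (A : Type v) [SmallCategory A]
    (E : K ⥤ (Aᵒᵖ ⥤ Type v)) [E.Full] [E.Faithful]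
    (F : (Aᵒᵖ ⥤ Type v) ⥤ K) (adj : F ⊣ E) (X : MorphismProperty (Aᵒᵖ ⥤ Type v))
    (hX : cofibrantClosure X = (⊤ : MorphismProperty (Aᵒᵖ ⥤ Type v))) :
    cofibrantClosure (strictImage F X) = (⊤ : MorphismProperty K) ∧
      IsWFS (⊤ : MorphismProperty K) (MorphismProperty.isomorphisms K) := by
  haveI : PreservesColimitsOfSize.{v, v} F := adj.leftAdjoint_preservesColimits
  haveI : PreservesColimitsOfSize.{0, 0} F := adj.leftAdjoint_preservesColimits
  constructor
  · apply top_unique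
    intro K1 K2 h _
    intro S hS hXS
    -- pull back S along F
    set S' : MorphismProperty (Aᵒᵖ ⥤ Type v) := fun _ _ g => S (F.map g) with hS'def
    have hS' : CofibrantlyClosed S' := by
      constructor
      · intro A1 B1 X1 Y1 f f' hr hf'
        exact hS.retract _ _ (isRetractArrow_map F hr) hf'
      · intro A1 B1 C1 P1 f g g' f' hpo hf
        exact hS.pushout _ _ _ _ (hpo.map F) hf
      · intro A1 B1 f hf
        exact hS.transfinite _ (isTransfiniteCompositionOf_map F S hf)
    have hXS' : X ≤ S' := by
      intro A1 B1 x hx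
      exact hXS _ ⟨A1, B1, x, hx, rfl, rfl, HEq.rfl⟩
    have h1 : S' (E.map h) := by
      have htop : cofibrantClosure X (E.map h) := by
        rw [hX]; exact MorphismProperty.top_apply _
      exact htop S' hS' hXS'
    -- h is a retract of F.map (E.map h) via the counit iso
    have hret : IsRetractArrow h (F.map (E.map h)) := by
      refine ⟨Arrow.homMk (u := inv (adj.counit.app K1)) (v := inv (adj.counit.app K2)) ?_,
        Arrow.homMk (u := adj.counit.app K1) (v := adj.counit.app K2) ?_, ?_⟩
      · dsimp
        rw [IsIso.inv_comp_eq, ← Category.assoc, IsIso.eq_comp_inv]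
        exact adj.counit.naturality h
      · exact (adj.counit.naturality h).symm
      · ext <;> simp
    exact hS.retract _ _ hret h1
  · constructor
    · funext P Q g
      apply propext
      constructor
      · intro hg A1 B1 f _
        haveI : IsIso g := hg
        infer_instance
      · intro hg
        haveI := hg g (MorphismProperty.top_apply _)
        have sq : CommSq (𝟙 P) g g (𝟙 Q) := ⟨by simp⟩
        exact ⟨sq.lift, sq.fac_left, sq.fac_right⟩
    · funext P Q f
      apply propext
      constructor
      · intro _ X1 Y1 g hg
        haveI : IsIso g := hg
        infer_instance
      · intro _
        exact MorphismProperty.top_apply _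
    · intro A1 B1 h
      exact ⟨B1, h, 𝟙 B1, MorphismProperty.top_apply _,
        MorphismProperty.isomorphisms.infer_property _,
        Category.comp_id h⟩

end Paper
end

section
/- In the category of presheaves Set^{A^op} on a small category A, every morphism is a retract of an X-cellular morphism for a suitable set X of morphisms; consequently (Mor(Set^{A^op}), Iso) is a cofibrantly generated weak factorization system. -/
open CategoryTheory CategoryTheory.Limits

universe w v u

namespace Paper

variable {K : Type u} [Category.{v} K]

/-! ### Auxiliary general lemmas -/

lemma eqvGen_map {α β : Type*} {r : α → α → Prop} {r' : β → β → Prop} (f : α → β)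
    (hf : ∀ x y, r x y → r' (f x) (f y)) {x y : α} (h : Relation.EqvGen r x y) :
    Relation.EqvGen r' (f x) (f y) := by
  induction h with
  | rel a b hab => exact Relation.EqvGen.rel _ _ (hf _ _ hab)
  | refl a => exact Relation.EqvGen.refl _
  | symm a b _ ih => exact Relation.EqvGen.symm _ _ ih
  | trans a b c _ _ ih1 ih2 => exact Relation.EqvGen.trans _ _ _ ih1 ih2

lemma eqvGen_eq_of_empty {α : Type*} {r : α → α → Prop} (hr : ∀ x y, ¬ r x y) {x y : α}
    (h : Relation.EqvGen r x y) : x = y := by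
  induction h with
  | rel a b hab => exact absurd hab (hr _ _)
  | refl a => rfl
  | symm a b _ ih => exact ih.symm
  | trans a b c _ _ ih1 ih2 => exact ih1.trans ih2

/-- HasLiftingProperty against an iso on the right. -/
lemma hasLifting_of_iso_right {A B X Y : K} (f : A ⟶ B) (g : X ⟶ Y) [IsIso g] :
    HasLiftingProperty f g := by
  constructor
  intro u v sq
  exact ⟨⟨⟨v ≫ inv g, by rw [← Category.assoc, ← sq.w]; simp, by simp⟩⟩⟩

lemma isWFS_top_iso : IsWFS (⊤ : MorphismProperty K) (MorphismProperty.isomorphisms K) := by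
  constructor
  · ext X Y g
    constructor
    · intro hg
      haveI : IsIso g := hg
      intro A B f _
      exact hasLifting_of_iso_right f g
    · intro hg
      have h := hg g trivial
      have sq : CommSq (𝟙 X) g g (𝟙 Y) := ⟨by simp⟩
      obtain ⟨⟨⟨l, hl1, hl2⟩⟩⟩ := h.sq_hasLift sq
      exact ⟨l, hl1, hl2⟩
    
  · ext A B f
    simp only [MorphismProperty.top_apply, true_iff]
    intro X Y g hg
    haveI : IsIso g := hg
    exact hasLifting_of_iso_right f g
  · intro A B h
    exact ⟨B, h, 𝟙 B, trivial, MorphismProperty.isomorphisms.infer_property _, by simp⟩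

section Presheaf
variable {A : Type u} [SmallCategory A]

/-- The empty presheaf. -/
def Empt : Aᵒᵖ ⥤ Type u where
  obj _ := PEmpty
  map _ := ↾PEmpty.elim
  map_id _ := by ext x; exact PEmpty.elim x
  map_comp _ _ := by ext x; exact PEmpty.elim x

/-- The unique map out of the empty presheaf. -/
def emptyTo (F : Aᵒᵖ ⥤ Type u) : (Empt : Aᵒᵖ ⥤ Type u) ⟶ F where
  app _ := ↾PEmpty.elim
  naturality _ _ _ := by ext x; exact PEmpty.elim x

lemma empt_hom_ext {F : Aᵒᵖ ⥤ Type u} (f g : (Empt : Aᵒᵖ ⥤ Type u) ⟶ F) : f = g := by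
  ext b x
  exact PEmpty.elim x

/-- The representable presheaf attached to `x : Aᵒᵖ`, written covariantly. -/
def rep (x : Aᵒᵖ) : Aᵒᵖ ⥤ Type u := coyoneda.obj (Opposite.op x)

/-- Two copies of the representable presheaf. -/
def repTwo (x : Aᵒᵖ) : Aᵒᵖ ⥤ Type u where
  obj b := (x ⟶ b) ⊕ (x ⟶ b)
  map u := ↾(Sum.map (· ≫ u) (· ≫ u))
  map_id _ := by ext m; cases m <;> simp
  map_comp _ _ := by ext m; cases m <;> simp

/-- The fold (codiagonal) map. -/
def fold (x : Aᵒᵖ) : repTwo x ⟶ rep x where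
  app b := ↾(Sum.elim id id)
  naturality _ _ u := by ext m; cases m <;> rfl

/-- A commutative square of presheaves which is a pointwise pushout is a pushout. -/
lemma isPushout_of_app {F1 F2 F3 F4 : Aᵒᵖ ⥤ Type u} {f : F1 ⟶ F2} {g : F1 ⟶ F3}
    {inl : F2 ⟶ F4} {inr : F3 ⟶ F4} (sq : CommSq f g inl inr)
    (H : ∀ b, IsPushout (f.app b) (g.app b) (inl.app b) (inr.app b)) :
    IsPushout f g inl inr := by
  refine IsPushout.of_isColimit (c := PushoutCocone.mk inl inr sq.w) ?_
  apply evaluationJointlyReflectsColimits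
  intro b
  exact (isColimitMapCoconePushoutCoconeEquiv ((evaluation Aᵒᵖ (Type u)).obj b) sq.w).symm
    (H b).isColimit

/-- The index type of the generating set. -/
def ind (A : Type u) : Type u := (A ⊕ A) ⊕ PUnit

/-- The generating arrows. -/
noncomputable def gen : ind A → Arrow (Aᵒᵖ ⥤ Type u)
  | Sum.inl (Sum.inl a) => Arrow.mk (emptyTo (rep (Opposite.op a)))
  | Sum.inl (Sum.inr a) => Arrow.mk (fold (Opposite.op a))
  | Sum.inr _ => Arrow.mk (𝟙 (Empt : Aᵒᵖ ⥤ Type u))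

/-- The generating class. -/
def Xgen (A : Type u) [SmallCategory A] : MorphismProperty (Aᵒᵖ ⥤ Type u) :=
  fun _ _ x => ∃ i, Arrow.mk x = gen i

lemma Xgen_emptyTo (x : Aᵒᵖ) : Xgen A (emptyTo (rep x)) :=
  ⟨Sum.inl (Sum.inl x.unop), by cases x; rfl⟩

lemma Xgen_fold (x : Aᵒᵖ) : Xgen A (fold x) :=
  ⟨Sum.inl (Sum.inr x.unop), by cases x; rfl⟩

lemma Xgen_id : Xgen A (𝟙 (Empt : Aᵒᵖ ⥤ Type u)) := ⟨Sum.inr PUnit.unit, rfl⟩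

/-- Every isomorphism is a pushout of a generator. -/
lemma pushouts_Xgen_of_iso {C P : Aᵒᵖ ⥤ Type u} (f' : C ⟶ P) [IsIso f'] :
    pushouts (Xgen A) f' := by
  refine ⟨Empt, Empt, 𝟙 _, emptyTo C, emptyTo C ≫ f', Xgen_id, ?_⟩
  exact IsPushout.of_horiz_isIso ⟨by simp [empt_hom_ext (𝟙 Empt ≫ emptyTo C ≫ f') (emptyTo C ≫ f')]⟩

end Presheaf
section Construction
set_option linter.unusedSectionVars false
variable {A : Type u} [SmallCategory A]

/-- Cells: one for every element of every value of `Q`. -/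
def Cell (Q : Aᵒᵖ ⥤ Type u) : Type u := Σ x : Aᵒᵖ, Q.obj x

/-- The presheaf obtained from `P` by freely attaching a cell for each element of `Q`. -/
def Mfun (P Q : Aᵒᵖ ⥤ Type u) : Aᵒᵖ ⥤ Type u where
  obj b := P.obj b ⊕ Σ t : Cell Q, (t.1 ⟶ b)
  map u := ↾(Sum.map (P.map u) (fun th => ⟨th.1, th.2 ≫ u⟩))
  map_id b := by
    ext m
    cases m with
    | inl p => simp
    | inr th => simp
  map_comp u v := by
    ext m
    cases m with
    | inl p => simp
    | inr th => simp [Sum.map]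

variable {P Q : Aᵒᵖ ⥤ Type u} (g : P ⟶ Q)

/-- The canonical evaluation map `M ⟶ Q`. -/
def eM : Mfun P Q ⟶ Q where
  app b := ↾(Sum.elim (g.app b) (fun th => Q.map th.2 th.1.2))
  naturality b b' u := by
    ext m
    cases m with
    | inl p => exact (ConcreteCategory.congr_hom (g.naturality u) p)
    | inr th => exact ConcreteCategory.congr_hom (Q.map_comp th.2 u) th.1.2

/-- Relations: pairs of elements of `M` with the same image in `Q`. -/
def RelT : Type u :=
  {z : Σ b : Aᵒᵖ, ((Mfun P Q).obj b) × ((Mfun P Q).obj b) //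
    (eM g).app z.1 z.2.1 = (eM g).app z.1 z.2.2}

variable {J : Type u} [LinearOrder J] [OrderBot J] [OrderTop J] [SuccOrder J]
  [WellFoundedLT J] (cpos : Cell Q → J) (rpos : RelT g → J)

/-- Admissibility of an element of `M` at stage `j`: its cell must appear strictly before `j`. -/
def MOk (j : J) (b : Aᵒᵖ) : (Mfun P Q).obj b → Prop
  | Sum.inl _ => True
  | Sum.inr th => cpos th.1 < j

lemma mok_mono {j j' : J} (hle : j ≤ j') {b : Aᵒᵖ} {m : (Mfun P Q).obj b}
    (hm : MOk cpos j b m) : MOk cpos j' b m := by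
  cases m with
  | inl p => trivial
  | inr th => exact lt_of_lt_of_le hm hle

/-- Elements admissible at stage `j`. -/
def MjObj (j : J) (b : Aᵒᵖ) : Type u := {m : (Mfun P Q).obj b // MOk cpos j b m}

def mjMap {j : J} {b b' : Aᵒᵖ} (u : b ⟶ b') (m : MjObj (P := P) cpos j b) :
    MjObj (P := P) cpos j b' :=
  ⟨(Mfun P Q).map u m.1, by
    rcases m with ⟨m, hm⟩
    cases m with
    | inl p => trivial
    | inr th => exact hm⟩

/-- The stage-`j` relation. -/
def BRel (j : J) (b : Aᵒᵖ) (x y : MjObj (P := P) cpos j b) : Prop :=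
  ∃ (r : RelT g) (h : r.1.1 ⟶ b), rpos r < j ∧
    x.1 = (Mfun P Q).map h r.1.2.1 ∧ y.1 = (Mfun P Q).map h r.1.2.2

/-- The stage-`j` presheaf of the chain. -/
def Fobj (j : J) : Aᵒᵖ ⥤ Type u where
  obj b := Quot (BRel (P := P) g cpos rpos j b)
  map u := ↾(Quot.lift (fun m => Quot.mk _ (mjMap cpos u m)) (by
    rintro x y ⟨r, h, hr, hx, hy⟩
    refine Quot.sound ⟨r, h ≫ u, hr, ?_, ?_⟩
    · show (Mfun P Q).map u x.1 = _
      rw [hx, FunctorToTypes.map_comp_apply]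
    · show (Mfun P Q).map u y.1 = _
      rw [hy, FunctorToTypes.map_comp_apply]))
  map_id b := by
    ext x
    induction x using Quot.ind with
    | _ m =>
      exact congrArg (Quot.mk _) (Subtype.ext (show (Mfun P Q).map (𝟙 b) m.1 = m.1 from
        FunctorToTypes.map_id_apply _ _))
  map_comp u v := by
    ext x
    induction x using Quot.ind with
    | _ m =>
      exact congrArg (Quot.mk _) (Subtype.ext
        (show (Mfun P Q).map (u ≫ v) m.1 = (Mfun P Q).map v ((Mfun P Q).map u m.1) from
          FunctorToTypes.map_comp_apply _ _ _ _))

/-- Transition maps of the chain. -/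
def tr {j j' : J} (hle : j ≤ j') : Fobj g cpos rpos j ⟶ Fobj g cpos rpos j' where
  app b := ↾(Quot.lift
    (fun m => Quot.mk _ (⟨m.1, mok_mono cpos hle m.2⟩ : MjObj (P := P) cpos j' b))
    (by rintro x y ⟨r, h, hr, hx, hy⟩; exact Quot.sound ⟨r, h, hr.trans_le hle, hx, hy⟩))
  naturality b b' u := by
    ext x
    induction x using Quot.ind with
    | _ m => rfl

/-- The chain functor. -/
def Fchain : J ⥤ (Aᵒᵖ ⥤ Type u) where
  obj := Fobj g cpos rpos
  map {j j'} u := tr g cpos rpos (leOfHom u)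
  map_id j := by
    apply NatTrans.ext
    funext b
    ext x
    induction x using Quot.ind with
    | _ m => rfl
  map_comp u v := by
    apply NatTrans.ext
    funext b
    ext x
    induction x using Quot.ind with
    | _ m => rfl

/-- The maps to `Q`. -/
def eps (j : J) : Fobj g cpos rpos j ⟶ Q where
  app b := ↾(Quot.lift (fun m => (eM g).app b m.1) (by
    rintro x y ⟨r, h, hr, hx, hy⟩
    show (eM g).app b x.1 = (eM g).app b y.1
    rw [hx, hy, FunctorToTypes.naturality, FunctorToTypes.naturality, r.2]))
  naturality b b' u := by
    ext x
    induction x using Quot.ind with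
    | _ m => exact NatTrans.naturality_apply (eM g) u m.1

lemma tr_eps {j j' : J} (hle : j ≤ j') :
    tr g cpos rpos hle ≫ eps g cpos rpos j' = eps g cpos rpos j := by
  apply NatTrans.ext
  funext b
  ext x
  induction x using Quot.ind with
  | _ m => rfl

/-- The cocone on the chain with point `Q`. -/
def coconeF : Cocone (Fchain g cpos rpos) where
  pt := Q
  ι :=
    { app := eps g cpos rpos
      naturality := fun j j' u => by
        simp only [Functor.const_obj_map, Category.comp_id]
        exact tr_eps g cpos rpos (leOfHom u) }

end Construction
section Construction2
set_option linter.unusedSectionVars false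
variable {A : Type u} [SmallCategory A] {P Q : Aᵒᵖ ⥤ Type u} (g : P ⟶ Q)
variable {J : Type u} [LinearOrder J] [OrderBot J] [OrderTop J] [SuccOrder J]
  [WellFoundedLT J] (cpos : Cell Q → J) (rpos : RelT g → J)

/-- The assumptions on the positioning functions. -/
structure GoodPos : Prop where
  cr : ∀ (t : Cell Q) (r : RelT g), cpos t < rpos r
  cinj : Function.Injective cpos
  rinj : Function.Injective rpos
  cbot : ∀ t, (⊥ : J) < cpos t
  ctop : ∀ t, cpos t < (⊤ : J)
  rtop : ∀ r, rpos r < (⊤ : J)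

variable {cpos} {rpos}

lemma mok_map_rel (hpos : GoodPos g cpos rpos) {k : J} (r : RelT g) (hk : rpos r < k)
    {b : Aᵒᵖ} (h : r.1.1 ⟶ b) (m : (Mfun P Q).obj r.1.1) :
    MOk cpos k b ((Mfun P Q).map h m) := by
  cases m with
  | inl p => trivial
  | inr th => exact (hpos.cr th.1 r).trans hk

/-- The canonical map `P ⟶ Fobj ⊥`. -/
def alphaP : P ⟶ Fobj g cpos rpos (⊥ : J) where
  app b := ↾(fun p => Quot.mk _ ⟨Sum.inl p, trivial⟩)
  naturality b b' u := by
    ext p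
    exact congrArg (Quot.mk _) (Subtype.ext rfl)

lemma brel_bot_empty (x y : MjObj (P := P) cpos (⊥ : J) b) : ¬ BRel g cpos rpos ⊥ b x y := by
  rintro ⟨r, h, hr, -, -⟩
  exact absurd hr (not_lt_bot)

lemma alphaP_bijective (hpos : GoodPos g cpos rpos) (b : Aᵒᵖ) :
    Function.Bijective ((alphaP g (cpos := cpos) (rpos := rpos)).app b) := by
  constructor
  · intro p p' h
    have := eqvGen_eq_of_empty (brel_bot_empty (g := g)) (Quot.eq.mp h)
    exact Sum.inl.inj (congrArg Subtype.val this)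
  · intro x
    induction x using Quot.ind with
    | _ m =>
      obtain ⟨mv, hmv⟩ := m
      cases mv with
      | inl p => exact ⟨p, rfl⟩
      | inr th => exact absurd hmv (by simp [MOk])

lemma alphaP_iso (hpos : GoodPos g cpos rpos) : IsIso (alphaP g (cpos := cpos) (rpos := rpos)) := by
  haveI : ∀ b, IsIso ((alphaP g (cpos := cpos) (rpos := rpos)).app b) := fun b =>
    (CategoryTheory.isIso_iff_bijective _).2 (alphaP_bijective g hpos b)
  exact NatIso.isIso_of_isIso_app _

lemma alphaP_eps : alphaP g (cpos := cpos) (rpos := rpos) ≫ eps g cpos rpos ⊥ = g := by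
  apply NatTrans.ext
  funext b
  ext p
  rfl

lemma epsTop_bijective (hpos : GoodPos g cpos rpos) (b : Aᵒᵖ) :
    Function.Bijective ((eps g cpos rpos (⊤ : J)).app b) := by
  constructor
  · intro x y
    induction x using Quot.ind with
    | _ m1 =>
      induction y using Quot.ind with
      | _ m2 =>
        intro h
        refine Quot.sound ⟨⟨⟨b, (m1.1, m2.1)⟩, h⟩, 𝟙 b, hpos.rtop _, ?_, ?_⟩
        · exact (FunctorToTypes.map_id_apply _ _).symm
        · exact (FunctorToTypes.map_id_apply _ _).symm
  · intro q
    refine ⟨Quot.mk _ ⟨Sum.inr ⟨⟨b, q⟩, 𝟙 b⟩, hpos.ctop _⟩, ?_⟩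
    exact FunctorToTypes.map_id_apply _ _

lemma epsTop_iso (hpos : GoodPos g cpos rpos) : IsIso (eps g cpos rpos (⊤ : J)) := by
  haveI : ∀ b, IsIso ((eps g cpos rpos (⊤ : J)).app b) := fun b =>
    (CategoryTheory.isIso_iff_bijective _).2 (epsTop_bijective g hpos b)
  exact NatIso.isIso_of_isIso_app _

/-- `⊤` is terminal in the preorder category `J`. -/
def topIsTerminal : IsTerminal (⊤ : J) :=
  IsTerminal.ofUniqueHom (fun j => homOfLE le_top) (fun j m => Subsingleton.elim _ _)

/-- The cocone `coconeF` is a colimit cocone. -/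
noncomputable def coconeFIsColimit (hpos : GoodPos g cpos rpos) :
    IsColimit (coconeF g cpos rpos) := by
  haveI : IsIso (eps g cpos rpos (⊤ : J)) := epsTop_iso g hpos
  refine IsColimit.ofIsoColimit (colimitOfDiagramTerminal topIsTerminal (Fchain g cpos rpos))
    (Cocones.ext (@asIso _ _ _ _ (eps g cpos rpos (⊤ : J)) this) ?_)
  intro j
  exact tr_eps g cpos rpos (leOfHom (topIsTerminal.from j))

end Construction2
section Construction3
set_option linter.unusedSectionVars false
variable {A : Type u} [SmallCategory A] {P Q : Aᵒᵖ ⥤ Type u} (g : P ⟶ Q)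
variable {J : Type u} [LinearOrder J] [OrderBot J] [OrderTop J] [SuccOrder J]
  [WellFoundedLT J] {cpos : Cell Q → J} {rpos : RelT g → J}

lemma brel_mono {k k' : J} (hle : k ≤ k') {b : Aᵒᵖ} (x y : MjObj (P := P) cpos k b)
    (h : BRel g cpos rpos k b x y) :
    BRel g cpos rpos k' b ⟨x.1, mok_mono cpos hle x.2⟩ ⟨y.1, mok_mono cpos hle y.2⟩ := by
  obtain ⟨r, hh, hr, hx, hy⟩ := h
  exact ⟨r, hh, hr.trans_le hle, hx, hy⟩

lemma elt_stage {j : J} (hj : Order.IsSuccPrelimit j) (hne : ∃ i : J, i < j) {b : Aᵒᵖ}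
    {m : (Mfun P Q).obj b} (hm : MOk cpos j b m) : ∃ k, k < j ∧ MOk cpos k b m := by
  cases m with
  | inl p =>
    obtain ⟨i, hi⟩ := hne
    exact ⟨i, hi, trivial⟩
  | inr th =>
    exact ⟨Order.succ (cpos th.1), hj.succ_lt hm,
      Order.lt_succ_of_not_isMax hm.not_isMax⟩

lemma eqvGen_bound (hpos : GoodPos g cpos rpos) {j : J} (hj : Order.IsSuccPrelimit j)
    (hne : ∃ i : J, i < j) {b : Aᵒᵖ} :
    ∀ {x y : MjObj (P := P) cpos j b}, Relation.EqvGen (BRel g cpos rpos j b) x y →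
    ∃ (k : J) (_ : k < j) (hx : MOk cpos k b x.1) (hy : MOk cpos k b y.1),
      Relation.EqvGen (BRel g cpos rpos k b) ⟨x.1, hx⟩ ⟨y.1, hy⟩ := by
  intro x y h
  induction h with
  | rel x y hr =>
    obtain ⟨r, hh, hrj, hx', hy'⟩ := hr
    have hsucc : rpos r < Order.succ (rpos r) := Order.lt_succ_of_not_isMax hrj.not_isMax
    refine ⟨Order.succ (rpos r), hj.succ_lt hrj,
      hx' ▸ mok_map_rel g hpos r hsucc hh _, hy' ▸ mok_map_rel g hpos r hsucc hh _, ?_⟩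
    exact Relation.EqvGen.rel _ _ ⟨r, hh, hsucc, hx', hy'⟩
  | refl x =>
    obtain ⟨k, hk, hkok⟩ := elt_stage hj hne x.2
    exact ⟨k, hk, hkok, hkok, Relation.EqvGen.refl _⟩
  | symm x y _ ih =>
    obtain ⟨k, hk, hx, hy, e⟩ := ih
    exact ⟨k, hk, hy, hx, Relation.EqvGen.symm _ _ e⟩
  | trans x y z _ _ ih1 ih2 =>
    obtain ⟨k1, hk1, hx1, hy1, e1⟩ := ih1
    obtain ⟨k2, hk2, hy2, hz2, e2⟩ := ih2
    refine ⟨max k1 k2, max_lt hk1 hk2, mok_mono cpos (le_max_left _ _) hx1,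
      mok_mono cpos (le_max_right _ _) hz2, ?_⟩
    have f1 := eqvGen_map
      (fun (m : MjObj (P := P) cpos k1 b) =>
        (⟨m.1, mok_mono cpos (le_max_left k1 k2) m.2⟩ : MjObj (P := P) cpos (max k1 k2) b))
      (brel_mono g (le_max_left k1 k2)) e1
    have f2 := eqvGen_map
      (fun (m : MjObj (P := P) cpos k2 b) =>
        (⟨m.1, mok_mono cpos (le_max_right k1 k2) m.2⟩ : MjObj (P := P) cpos (max k1 k2) b))
      (brel_mono g (le_max_right k1 k2)) e2
    exact Relation.EqvGen.trans _ _ _ f1 f2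

/-- The chain is smooth. -/
noncomputable def smoothAux (hpos : GoodPos g cpos rpos) (j : J) (hj : Order.IsSuccLimit j) :
    IsColimit (restrictionCocone (Fchain g cpos rpos) j) := by
  apply evaluationJointlyReflectsColimits
  intro b
  have hne : ∃ i : J, i < j := not_isMin_iff.mp hj.not_isMin
  apply Types.FilteredColimit.isColimitOf
  · -- surjectivity
    intro x
    induction x using Quot.ind with
    | _ m =>
      obtain ⟨mv, hmv⟩ := m
      cases mv with
      | inl p =>
        obtain ⟨i, hi⟩ := hne
        exact ⟨⟨i, hi⟩, Quot.mk _ ⟨Sum.inl p, trivial⟩, rfl⟩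
      | inr th =>
        refine ⟨⟨Order.succ (cpos th.1), hj.succ_lt hmv⟩,
          Quot.mk _ ⟨Sum.inr th, Order.lt_succ_of_not_isMax hmv.not_isMax⟩, rfl⟩
  · -- injectivity
    intro i1 i2 x1 x2 h
    induction x1 using Quot.ind with
    | _ m1 =>
      induction x2 using Quot.ind with
      | _ m2 =>
        have h' : Quot.mk (BRel g cpos rpos j b) ⟨m1.1, mok_mono cpos i1.2.le m1.2⟩ =
            Quot.mk _ ⟨m2.1, mok_mono cpos i2.2.le m2.2⟩ := h
        obtain ⟨k, hk, hx, hy, e⟩ := eqvGen_bound g hpos hj.isSuccPrelimit hne (Quot.eq.mp h')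
        set kk := max (max i1.1 i2.1) k with hkk
        have hkkj : kk < j := max_lt (max_lt i1.2 i2.2) hk
        refine ⟨⟨kk, hkkj⟩, homOfLE (le_max_of_le_left (le_max_left _ _)),
          homOfLE (le_max_of_le_left (le_max_right _ _)), ?_⟩
        have e' := eqvGen_map
          (fun (m : MjObj (P := P) cpos k b) =>
            (⟨m.1, mok_mono cpos (le_max_right _ _) m.2⟩ : MjObj (P := P) cpos kk b))
          (brel_mono g (le_max_right _ _)) e
        exact Quot.eqvGen_sound e'

end Construction3
section Construction4
set_option linter.unusedSectionVars false
set_option maxHeartbeats 1000000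
variable {A : Type u} [SmallCategory A] {P Q : Aᵒᵖ ⥤ Type u} (g : P ⟶ Q)
variable {J : Type u} [LinearOrder J] [OrderBot J] [OrderTop J] [SuccOrder J]
  [WellFoundedLT J] {cpos : Cell Q → J} {rpos : RelT g → J}

/-! ### Trivial steps -/

lemma step_triv (hpos : GoodPos g cpos rpos) (j : J) (hj : ¬IsMax j)
    (hc : ¬∃ t : Cell Q, cpos t = j) (hr : ¬∃ r : RelT g, rpos r = j) :
    pushouts (Xgen A) (tr g cpos rpos (Order.le_succ j)) := by
  have hcell : ∀ (b : Aᵒᵖ) (m : (Mfun P Q).obj b), MOk cpos (Order.succ j) b m → MOk cpos j b m := by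
    intro b m hm
    cases m with
    | inl p => trivial
    | inr th =>
      rcases lt_or_eq_of_le ((Order.lt_succ_iff_of_not_isMax hj).1 hm) with h | h
      · exact h
      · exact absurd ⟨th.1, h⟩ hc
  have hrel : ∀ (b : Aᵒᵖ) (x y : MjObj (P := P) cpos (Order.succ j) b),
      BRel g cpos rpos (Order.succ j) b x y →
      BRel g cpos rpos j b ⟨x.1, hcell b x.1 x.2⟩ ⟨y.1, hcell b y.1 y.2⟩ := by
    rintro b x y ⟨r, h, hrj, hx, hy⟩
    rcases lt_or_eq_of_le ((Order.lt_succ_iff_of_not_isMax hj).1 hrj) with h' | h'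
    · exact ⟨r, h, h', hx, hy⟩
    · exact absurd ⟨r, h'⟩ hr
  haveI : IsIso (tr g cpos rpos (Order.le_succ j) (P := P)) := by
    haveI : ∀ b, IsIso ((tr g cpos rpos (Order.le_succ j) (P := P)).app b) := by
      intro b
      rw [CategoryTheory.isIso_iff_bijective]
      constructor
      · intro x y
        induction x using Quot.ind with
        | _ m1 =>
          induction y using Quot.ind with
          | _ m2 =>
            intro h
            have h' : Quot.mk (BRel g cpos rpos (Order.succ j) b)
                ⟨m1.1, mok_mono cpos (Order.le_succ j) m1.2⟩ =
                Quot.mk _ ⟨m2.1, mok_mono cpos (Order.le_succ j) m2.2⟩ := h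
            have e := eqvGen_map
              (fun (m : MjObj (P := P) cpos (Order.succ j) b) =>
                (⟨m.1, hcell b m.1 m.2⟩ : MjObj (P := P) cpos j b))
              (hrel b) (Quot.eq.mp h')
            exact Quot.eqvGen_sound e
      · intro x
        induction x using Quot.ind with
        | _ m => exact ⟨Quot.mk _ ⟨m.1, hcell b m.1 m.2⟩, rfl⟩
    exact NatIso.isIso_of_isIso_app _
  exact pushouts_Xgen_of_iso _

/-! ### Cell attachment steps -/

/-- The insertion of the cell `t0` at stage `succ (cpos t0)`. -/
def cellIns (t0 : Cell Q) (j : J) (hc0 : cpos t0 < Order.succ j) :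
    rep t0.1 ⟶ Fobj g cpos rpos (Order.succ j) where
  app b := ↾(fun h => Quot.mk _ ⟨Sum.inr ⟨t0, h⟩, hc0⟩)
  naturality b b' u := by
    ext h
    exact congrArg (Quot.mk _) (Subtype.ext rfl)

lemma step_cell (hpos : GoodPos g cpos rpos) (j : J) (hj : ¬IsMax j)
    (t0 : Cell Q) (hc0 : cpos t0 = j) :
    pushouts (Xgen A) (tr g cpos rpos (Order.le_succ j) (P := P)) := by
  have hc0' : cpos t0 < Order.succ j := lt_of_le_of_lt hc0.le (Order.lt_succ_of_not_isMax hj)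
  -- no relations are active at stage `succ j` (we are still in the cell phase)
  have norel : ∀ (r : RelT g), ¬ rpos r < Order.succ j := by
    intro r hrel
    rcases lt_or_eq_of_le ((Order.lt_succ_iff_of_not_isMax hj).1 hrel) with h' | h'
    · exact absurd ((hpos.cr t0 r).trans (h'.trans_eq hc0.symm)) (lt_irrefl _)
    · exact absurd (h' ▸ hpos.cr t0 r : cpos t0 < j) (hc0 ▸ lt_irrefl _)
  have noBrel : ∀ (k : J), k ≤ Order.succ j → ∀ (b : Aᵒᵖ)
      (x y : MjObj (P := P) cpos k b), ¬ BRel g cpos rpos k b x y := by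
    rintro k hk b x y ⟨r, h, hrk, -, -⟩
    exact norel r (hrk.trans_le hk)
  refine ⟨Empt, rep t0.1, emptyTo (rep t0.1), emptyTo _, cellIns g t0 j hc0',
    Xgen_emptyTo t0.1, ?_⟩
  have sq : CommSq (emptyTo (rep t0.1)) (emptyTo (Fobj g cpos rpos j))
      (cellIns g t0 j hc0') (tr g cpos rpos (Order.le_succ j)) := ⟨empt_hom_ext _ _⟩
  refine isPushout_of_app sq ?_
  intro b
  refine IsPushout.of_isColimit' (w := ⟨congr_fun (congrArg NatTrans.app sq.w) b⟩) ?_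
  refine PushoutCocone.IsColimit.mk _ ?_ ?_ ?_ ?_
  · -- desc
    intro s
    exact ↾(Quot.lift (fun m =>
      match m with
      | ⟨Sum.inl p, _⟩ => s.inr (Quot.mk _ ⟨Sum.inl p, trivial⟩)
      | ⟨Sum.inr th, hok⟩ =>
        if hlt : cpos th.1 < j then s.inr (Quot.mk _ ⟨Sum.inr th, hlt⟩)
        else s.inl
          ((hpos.cinj ((((Order.lt_succ_iff_of_not_isMax hj).1 hok).antisymm
            (not_lt.mp hlt)).trans hc0.symm) : th.1 = t0) ▸ th.2))
      (fun x y hxy => absurd hxy (noBrel _ le_rfl b x y)))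
  · -- fac_left
    intro s
    ext h
    simp only [types_comp_apply]
    show dite _ _ _ = s.inl h
    rw [dif_neg (show ¬ cpos t0 < j from fun hcon => absurd (hc0 ▸ hcon) (lt_irrefl j))]
  · -- fac_right
    intro s
    ext x
    induction x using Quot.ind with
    | _ m =>
      rcases m with ⟨mv, hok⟩
      cases mv with
      | inl p => rfl
      | inr th =>
        simp only [types_comp_apply]
        show dite _ _ _ = s.inr _
        rw [dif_pos (show cpos th.1 < j from hok)]
  · -- uniq
    intro s m' h1 h2
    ext x
    induction x using Quot.ind with
    | _ m =>
      rcases m with ⟨mv, hok⟩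
      cases mv with
      | inl p =>
        exact ConcreteCategory.congr_hom h2 (Quot.mk _ ⟨Sum.inl p, trivial⟩)
      | inr th =>
        by_cases hlt : cpos th.1 < j
        · have e2 := ConcreteCategory.congr_hom h2 (Quot.mk _ ⟨Sum.inr th, hlt⟩)
          refine Eq.trans e2 ?_
          show s.inr _ = dite _ _ _
          rw [dif_pos hlt]
        · obtain ⟨t, hh⟩ := th
          have ht : t = t0 := hpos.cinj
            ((((Order.lt_succ_iff_of_not_isMax hj).1 hok).antisymm
              (not_lt.mp hlt)).trans hc0.symm)
          subst ht
          have e1 := ConcreteCategory.congr_hom h1 hh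
          refine Eq.trans e1 ?_
          show s.inl hh = dite _ _ _
          rw [dif_neg (show ¬ cpos t < j from fun hcon => absurd (hc0 ▸ hcon) (lt_irrefl j))]
end Construction4
section Construction5
set_option linter.unusedSectionVars false
set_option maxHeartbeats 1000000
variable {A : Type u} [SmallCategory A] {P Q : Aᵒᵖ ⥤ Type u} (g : P ⟶ Q)
variable {J : Type u} [LinearOrder J] [OrderBot J] [OrderTop J] [SuccOrder J]
  [WellFoundedLT J] {cpos : Cell Q → J} {rpos : RelT g → J}

lemma mok_all_of_rel (hpos : GoodPos g cpos rpos) {j : J} (r0 : RelT g) (hr0 : rpos r0 = j)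
    {b : Aᵒᵖ} (m : (Mfun P Q).obj b) : MOk cpos j b m := by
  cases m with
  | inl p => trivial
  | inr th => exact hr0 ▸ hpos.cr th.1 r0

/-- Left leg of the coequalizing pushout square. -/
def twoIns (hpos : GoodPos g cpos rpos) {j : J} (r0 : RelT g) (hr0 : rpos r0 = j) :
    repTwo r0.1.1 ⟶ Fobj g cpos rpos j where
  app b := ↾(Sum.elim
    (fun h => Quot.mk _ ⟨(Mfun P Q).map h r0.1.2.1, mok_all_of_rel g hpos r0 hr0 _⟩)
    (fun h => Quot.mk _ ⟨(Mfun P Q).map h r0.1.2.2, mok_all_of_rel g hpos r0 hr0 _⟩))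
  naturality b b' u := by
    ext m
    cases m with
    | inl h => exact congrArg (Quot.mk _) (Subtype.ext
        (show (Mfun P Q).map (h ≫ u) r0.1.2.1 = (Mfun P Q).map u ((Mfun P Q).map h r0.1.2.1) from
          FunctorToTypes.map_comp_apply _ _ _ _))
    | inr h => exact congrArg (Quot.mk _) (Subtype.ext
        (show (Mfun P Q).map (h ≫ u) r0.1.2.2 = (Mfun P Q).map u ((Mfun P Q).map h r0.1.2.2) from
          FunctorToTypes.map_comp_apply _ _ _ _))

/-- Right leg of the coequalizing pushout square. -/
def relIns (hpos : GoodPos g cpos rpos) {j : J} (r0 : RelT g) (hr0 : rpos r0 = j) :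
    rep r0.1.1 ⟶ Fobj g cpos rpos (Order.succ j) where
  app b := ↾(fun h => Quot.mk _ ⟨(Mfun P Q).map h r0.1.2.1,
    mok_mono cpos (Order.le_succ j) (mok_all_of_rel g hpos r0 hr0 _)⟩)
  naturality b b' u := by
    ext h
    exact congrArg (Quot.mk _) (Subtype.ext
      (show (Mfun P Q).map (h ≫ u) r0.1.2.1 = (Mfun P Q).map u ((Mfun P Q).map h r0.1.2.1) from
        FunctorToTypes.map_comp_apply _ _ _ _))

lemma step_rel (hpos : GoodPos g cpos rpos) (j : J) (hj : ¬IsMax j)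
    (r0 : RelT g) (hr0 : rpos r0 = j) :
    pushouts (Xgen A) (tr g cpos rpos (Order.le_succ j) (P := P)) := by
  have hr0' : rpos r0 < Order.succ j := lt_of_le_of_lt hr0.le (Order.lt_succ_of_not_isMax hj)
  refine ⟨repTwo r0.1.1, rep r0.1.1, fold r0.1.1, twoIns g hpos r0 hr0,
    relIns g hpos r0 hr0, Xgen_fold r0.1.1, ?_⟩
  have sq : CommSq (fold r0.1.1) (twoIns g hpos r0 hr0) (relIns g hpos r0 hr0)
      (tr g cpos rpos (Order.le_succ j)) := by
    constructor
    apply NatTrans.ext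
    funext b
    ext m
    cases m with
    | inl h => exact congrArg (Quot.mk _) (Subtype.ext rfl)
    | inr h => exact Quot.sound ⟨r0, h, hr0', rfl, rfl⟩
  refine isPushout_of_app sq ?_
  intro b
  refine IsPushout.of_isColimit' (w := ⟨congr_fun (congrArg NatTrans.app sq.w) b⟩) ?_
  refine PushoutCocone.IsColimit.mk _ ?_ ?_ ?_ ?_
  · -- desc
    intro s
    refine ↾(Quot.lift (fun m => s.inr (Quot.mk _ ⟨m.1, mok_all_of_rel g hpos r0 hr0 m.1⟩)) ?_)
    rintro x y ⟨r, h, hrs, hx, hy⟩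
    by_cases hlt : rpos r < j
    · exact TypeCat.congr_arg s.inr (Quot.sound ⟨r, h, hlt, hx, hy⟩)
    · have hr : r = r0 := hpos.rinj
        ((((Order.lt_succ_iff_of_not_isMax hj).1 hrs).antisymm (not_lt.mp hlt)).trans hr0.symm)
      subst hr
      have e1 := types_congr_hom s.condition (Sum.inl h)
      have e2 := types_congr_hom s.condition (Sum.inr h)
      calc s.inr (Quot.mk _ ⟨x.1, mok_all_of_rel g hpos r hr0 x.1⟩)
          = s.inr (Quot.mk _ ⟨(Mfun P Q).map h r.1.2.1, mok_all_of_rel g hpos r hr0 _⟩) :=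
            TypeCat.congr_arg s.inr (congrArg (Quot.mk _) (Subtype.ext hx))
        _ = s.inl h := e1.symm
        _ = s.inr (Quot.mk _ ⟨(Mfun P Q).map h r.1.2.2, mok_all_of_rel g hpos r hr0 _⟩) := e2
        _ = s.inr (Quot.mk _ ⟨y.1, mok_all_of_rel g hpos r hr0 y.1⟩) :=
            TypeCat.congr_arg s.inr (congrArg (Quot.mk _) (Subtype.ext hy.symm))
  · -- fac_left
    intro s
    ext h
    exact (types_congr_hom s.condition (Sum.inl h)).symm
  · -- fac_right
    intro s
    ext x
    induction x using Quot.ind with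
    | _ m => rfl
  · -- uniq
    intro s m' h1 h2
    ext x
    induction x using Quot.ind with
    | _ m => exact ConcreteCategory.congr_hom h2 (Quot.mk _ ⟨m.1, mok_all_of_rel g hpos r0 hr0 m.1⟩)

end Construction5
section Assemble
set_option linter.unusedSectionVars false
set_option maxHeartbeats 1000000
variable {A : Type u} [SmallCategory A] {P Q : Aᵒᵖ ⥤ Type u} (g : P ⟶ Q)

lemma step_mem {J : Type u} [LinearOrder J] [OrderBot J] [OrderTop J] [SuccOrder J]
    [WellFoundedLT J] {cpos : Cell Q → J} {rpos : RelT g → J}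
    (hpos : GoodPos g cpos rpos) (j : J) (hj : ¬IsMax j) :
    pushouts (Xgen A) ((Fchain g cpos rpos).map (homOfLE (Order.le_succ j))) := by
  by_cases hc : ∃ t : Cell Q, cpos t = j
  · obtain ⟨t0, ht0⟩ := hc
    exact step_cell g hpos j hj t0 ht0
  by_cases hrel : ∃ r : RelT g, rpos r = j
  · obtain ⟨r0, hr0⟩ := hrel
    exact step_rel g hpos j hj r0 hr0
  · exact step_triv g hpos j hj hc hrel

lemma exists_cellular_retract :
    ∃ (P' Q' : Aᵒᵖ ⥤ Type u) (g' : P' ⟶ Q'),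
      IsCellular (Xgen A) g' ∧ IsRetractArrow g g' := by
  classical
  let C0 := Cell Q ⊕ RelT g
  let rel : C0 → C0 → Prop := Sum.Lex WellOrderingRel WellOrderingRel
  haveI hwo : IsWellOrder C0 rel := inferInstance
  letI : LinearOrder C0 := IsWellOrder.linearOrder rel
  haveI : WellFoundedLT C0 := ⟨(IsWellFounded.wf : WellFounded rel)⟩
  let J := WithBot (WithTop C0)
  letI : SuccOrder J := SuccOrder.ofLinearWellFoundedLT J
  let cpos : Cell Q → J := fun t => ((Sum.inl t : C0) : WithTop C0)
  let rpos : RelT g → J := fun r => ((Sum.inr r : C0) : WithTop C0)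
  have hpos : GoodPos g cpos rpos := by
    constructor
    · intro t r
      exact WithBot.coe_lt_coe.2 (WithTop.coe_lt_coe.2 (Sum.Lex.sep _ _))
    · intro t t' h
      exact Sum.inl.inj (WithTop.coe_injective (WithBot.coe_injective h))
    · intro r r' h
      exact Sum.inr.inj (WithTop.coe_injective (WithBot.coe_injective h))
    · intro t
      exact WithBot.bot_lt_coe _
    · intro t
      exact WithBot.coe_lt_coe.2 (WithTop.coe_lt_top _)
    · intro r
      exact WithBot.coe_lt_coe.2 (WithTop.coe_lt_top _)
  refine ⟨Fobj g cpos rpos (⊥ : J), Q, eps g cpos rpos ⊥, ?_, ?_⟩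
  · refine ⟨J, inferInstance, inferInstance, inferInstance, inferInstance,
      Fchain g cpos rpos, coconeF g cpos rpos, coconeFIsColimit g hpos, rfl, rfl,
      fun j hj => ⟨smoothAux g hpos j hj⟩, fun j hj => step_mem g hpos j hj,
      by rfl⟩
  · haveI := alphaP_iso g hpos
    refine ⟨Arrow.homMk (u := alphaP g (cpos := cpos) (rpos := rpos)) (v := 𝟙 Q) ?_,
      Arrow.homMk (u := inv (alphaP g (cpos := cpos) (rpos := rpos))) (v := 𝟙 Q) ?_, ?_⟩
    · simp [alphaP_eps g]
    · show inv (alphaP g (cpos := cpos) (rpos := rpos)) ≫ g = eps g cpos rpos ⊥ ≫ 𝟙 Q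
      rw [Category.comp_id]
      exact (IsIso.inv_comp_eq _).2 (alphaP_eps g).symm
    · apply Arrow.hom_ext <;> simp

end Assemble


theorem stmt15 (A : Type u) [SmallCategory A] :
    ∃ (ι : Type u) (φ : ι → Arrow (Aᵒᵖ ⥤ Type u)),
      (∀ {P Q : Aᵒᵖ ⥤ Type u} (g : P ⟶ Q),
        ∃ (P' Q' : Aᵒᵖ ⥤ Type u) (g' : P' ⟶ Q'),
          IsCellular (fun _ _ x => ∃ i, Arrow.mk x = φ i) g' ∧ IsRetractArrow g g') ∧
      cofibrantClosure (fun _ _ x => ∃ i, Arrow.mk x = φ i) =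
        (⊤ : MorphismProperty (Aᵒᵖ ⥤ Type u)) ∧
      IsWFS (⊤ : MorphismProperty (Aᵒᵖ ⥤ Type u))
        (MorphismProperty.isomorphisms (Aᵒᵖ ⥤ Type u)) := by
  refine ⟨ind A, gen, ?_, ?_, isWFS_top_iso⟩
  · intro P Q g
    exact exists_cellular_retract g
  · ext X Y f
    simp only [MorphismProperty.top_apply, iff_true]
    intro S hS hXS
    obtain ⟨P', Q', g', hcell, hret⟩ := exists_cellular_retract f
    have hpush : pushouts (Xgen A) ≤ S := by
      rintro U V h ⟨a, b, ff, gg, gg', hf, hpo⟩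
      exact hS.pushout ff gg gg' h hpo (hXS _ hf)
    have hS' : S g' := by
      apply hS.transfinite
      obtain ⟨J, i1, i2, i3, i4, F, c, hc, hX, hY, hs, hstep, heq⟩ := hcell
      exact ⟨J, i1, i2, i3, i4, F, c, hc, hX, hY, hs, fun j hj => hpush _ (hstep j hj), heq⟩
    exact hS.retract f g' hret hS'
end Paper
end
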